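/- Fibonacci wheel closure forces torsion: let G be an abelian group and a, b ∈ G, n ≥ 3, and define P_0 = a, P_1 = b, P_{i+2} = P_i + P_{i+1}. If P_n = P_0 and P_{n+1} = P_1, then (F_{n-1} - 1)·a + F_n·b = 0 and (F_{n-2} + 1)·a + (F_{n-1} - 1)·b = 0, where F_k are the Fibonacci numbers; consequently t·a = 0 and t·b = 0 where t·d = F_{n-1} + F_{n+1} - 1 - (-1)^n and d = gcd(F_{n-2} + 1, F_{n-1} - 1). -/

import Mathlib

private lemma fib_cassini (m : ℕ) :
    (Nat.fib (m + 1) : ℤ) * Nat.fib (m + 3) - (Nat.fib (m + 2) : ℤ) ^ 2 = (-1) ^ m := by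
  induction m with
  | zero => norm_num [Nat.fib]
  | succ k ih =>
    have h3 : (Nat.fib (k + 3) : ℤ) = Nat.fib (k + 1) + Nat.fib (k + 2) := by
      rw [show k + 3 = k + 1 + 2 from rfl, Nat.fib_add_two]; push_cast; ring
    have h4 : (Nat.fib (k + 4) : ℤ) = Nat.fib (k + 2) + Nat.fib (k + 3) := by
      rw [show k + 4 = k + 2 + 2 from rfl, Nat.fib_add_two]; push_cast; ring
    rw [h3] at ih
    rw [show k + 1 + 1 = k + 2 from rfl, show k + 1 + 2 = k + 3 from rfl,
      show k + 1 + 3 = k + 4 from rfl, h4, h3, pow_succ]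
    linear_combination -ih

/-- A Fibonacci wheel that closes up forces torsion relations on a and b. -/
theorem fibonacci_wheel_torsion {G : Type*} [AddCommGroup G]
    (a b : G) (n : ℕ) (hn : 3 ≤ n) (P : ℕ → G)
    (h0 : P 0 = a) (h1 : P 1 = b) (hrec : ∀ i, P (i + 2) = P i + P (i + 1))
    (hclose0 : P n = P 0) (hclose1 : P (n + 1) = P 1) :
    ((Nat.fib (n - 1) : ℤ) - 1) • a + (Nat.fib n : ℤ) • b = 0 ∧
    ((Nat.fib (n - 2) : ℤ) + 1) • a + ((Nat.fib (n - 1) : ℤ) - 1) • b = 0 ∧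
    ∀ t : ℤ,
      t * (Int.gcd ((Nat.fib (n - 2) : ℤ) + 1) ((Nat.fib (n - 1) : ℤ) - 1) : ℤ) =
        (Nat.fib (n - 1) : ℤ) + (Nat.fib (n + 1) : ℤ) - 1 - (-1) ^ n →
      t • a = 0 ∧ t • b = 0 := by
  -- general formula for P
  have key : ∀ k, P (k + 1) = Nat.fib k • a + Nat.fib (k + 1) • b := by
    intro k
    induction k using Nat.twoStepInduction with
    | zero => simp [h1, Nat.fib]
    | one => rw [hrec 0, h0, h1]; simp [Nat.fib]
    | more k ih1 ih2 =>
      rw [hrec (k + 1), ih1, ih2, show k + 1 + 1 = k + 2 from rfl,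
        show k + 2 + 1 = k + 3 from rfl,
        show Nat.fib (k + 3) = Nat.fib (k + 1) + Nat.fib (k + 2) from Nat.fib_add_two,
        show Nat.fib (k + 2) = Nat.fib k + Nat.fib (k + 1) from Nat.fib_add_two]
      simp only [add_smul]
      abel
  obtain ⟨m, rfl⟩ : ∃ m, n = m + 3 := ⟨n - 3, by omega⟩
  simp only [show m + 3 - 1 = m + 2 from rfl, show m + 3 - 2 = m + 1 from rfl,
    show m + 3 + 1 = m + 4 from rfl] at *
  set A : ℤ := (Nat.fib (m + 1) : ℤ) with hA
  set B : ℤ := (Nat.fib (m + 2) : ℤ) with hB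
  have f3 : (Nat.fib (m + 3) : ℤ) = A + B := by
    rw [show m + 3 = m + 1 + 2 from rfl, Nat.fib_add_two]; push_cast; ring
  have f4 : (Nat.fib (m + 4) : ℤ) = A + 2 * B := by
    rw [show m + 4 = m + 2 + 2 from rfl, Nat.fib_add_two]; push_cast
    rw [f3]; ring
  have hC : A * (A + B) - B ^ 2 = (-1) ^ m := by
    have := fib_cassini m; rw [f3] at this; exact this
  -- the two integer relations
  have e1 : B • a + (A + B) • b = a := by
    have h := key (m + 2)
    rw [show m + 2 + 1 = m + 3 from rfl, hclose0, h0] at h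
    rw [← f3, hB, natCast_zsmul, natCast_zsmul]
    exact h.symm
  have e2 : (A + B) • a + (A + 2 * B) • b = b := by
    have h := key (m + 3)
    rw [show m + 3 + 1 = m + 4 from rfl, hclose1, h1] at h
    rw [← f3, ← f4, natCast_zsmul, natCast_zsmul]
    exact h.symm
  have hR1 : (B - 1) • a + (A + B) • b = 0 := by
    have key2 : (B - 1) • a + (A + B) • b = (B • a + (A + B) • b) - a := by module
    rw [key2, e1, sub_self]
  have hR2 : (A + 1) • a + (B - 1) • b = 0 := by
    have key2 : (A + 1) • a + (B - 1) • b =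
        ((A + B) • a + (A + 2 * B) • b - b) - ((B • a + (A + B) • b) - a) := by module
    rw [key2, e1, e2, sub_self, sub_self, sub_zero]
  refine ⟨by rw [f3]; exact hR1, hR2, ?_⟩
  intro t ht
  rw [f4] at ht
  set d : ℤ := (Int.gcd (A + 1) (B - 1) : ℤ) with hd
  have hd0 : d ≠ 0 := by
    rw [hd]
    simp only [ne_eq, Nat.cast_eq_zero, Int.gcd_eq_zero_iff, not_and]
    intro h; exfalso; have : (0 : ℤ) ≤ A := by rw [hA]; positivity
    omega
  obtain ⟨p, hp⟩ : d ∣ A + 1 := Int.gcd_dvd_left _ _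
  obtain ⟨q, hq⟩ : d ∣ B - 1 := Int.gcd_dvd_right _ _
  have hm3 : ((-1 : ℤ)) ^ (m + 3) = -(-1) ^ m := by rw [pow_add]; ring
  rw [hm3] at ht
  -- t = -D/d where D = (B-1)^2 - (A+B)(A+1)
  have hDt : (B - 1) ^ 2 - (A + B) * (A + 1) = -(t * d) := by
    linear_combination ht - hC
  have hcoef1 : q * (B - 1) - (p + q) * (A + 1) = -t := by
    apply mul_left_cancel₀ hd0
    calc d * (q * (B - 1) - (p + q) * (A + 1))
        = (B - 1) * (d * q) - (A + 1) * (d * p) - (A + 1) * (d * q) := by ring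
      _ = (B - 1) ^ 2 - (A + B) * (A + 1) := by rw [← hp, ← hq]; ring
      _ = d * (-t) := by rw [hDt]; ring
  have hcoef2 : q * (A + B) - (p + q) * (B - 1) = 0 := by
    apply mul_left_cancel₀ hd0
    calc d * (q * (A + B) - (p + q) * (B - 1))
        = (A + B) * (d * q) - (B - 1) * (d * p) - (B - 1) * (d * q) := by ring
      _ = (A + B) * (B - 1) - (B - 1) * (A + 1) - (B - 1) * (B - 1) := by rw [← hp, ← hq]
      _ = d * 0 := by ring
  have hcoef3 : p * (B - 1) - q * (A + 1) = 0 := by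
    apply mul_left_cancel₀ hd0
    calc d * (p * (B - 1) - q * (A + 1))
        = (B - 1) * (d * p) - (A + 1) * (d * q) := by ring
      _ = (B - 1) * (A + 1) - (A + 1) * (B - 1) := by rw [← hp, ← hq]
      _ = d * 0 := by ring
  have hcoef4 : p * (A + B) - q * (B - 1) = t := by
    apply mul_left_cancel₀ hd0
    calc d * (p * (A + B) - q * (B - 1))
        = (A + B) * (d * p) - (B - 1) * (d * q) := by ring
      _ = (A + B) * (A + 1) - (B - 1) * (B - 1) := by rw [← hp, ← hq]
      _ = d * t := by linear_combination -hDt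
  constructor
  · have h : (q * (B - 1) - (p + q) * (A + 1)) • a + (q * (A + B) - (p + q) * (B - 1)) • b =
        q • ((B - 1) • a + (A + B) • b) - (p + q) • ((A + 1) • a + (B - 1) • b) := by module
    rw [hR1, hR2, hcoef1, hcoef2] at h
    simp only [zero_smul, add_zero, smul_zero, sub_zero, neg_smul, neg_eq_zero] at h
    exact h
  · have h : (p * (B - 1) - q * (A + 1)) • a + (p * (A + B) - q * (B - 1)) • b =
        p • ((B - 1) • a + (A + B) • b) - q • ((A + 1) • a + (B - 1) • b) := by module
    rw [hR1, hR2, hcoef3, hcoef4] at h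
    simp only [zero_smul, zero_add, smul_zero, sub_zero] at h
    exact h
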